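/- In the root system of type C_n with Φ₁⁺ = {ε_i + ε_j : 1 ≤ i ≤ j ≤ n}, ordered by the dominance order of Φ₀ (generated by ε_i − ε_{i+1}): a pairwise orthogonal subset {ε_{i₁}+ε_{j₁}, …, ε_{i_m}+ε_{j_m}} (with i_k ≤ j_k, all indices i_k, j_k forming disjoint pairs) is an antichain if and only if, up to permutation, i₁ < i₂ < ⋯ < i_m ≤ j_m < j_{m−1} < ⋯ < j₁. Consequently, there is a unique antichain among the maximal orthogonal subsets of Φ₁⁺. -/

import Mathlib

lemma part1 (n m : ℕ) (I J : Fin m → Fin n)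
    (hIJ : ∀ k, I k ≤ J k)
    (hdisj : ∀ k l, k ≠ l → I k ≠ I l ∧ I k ≠ J l ∧ J k ≠ J l) :
    (∀ k l, k ≠ l → ¬ (I k ≤ I l ∧ J k ≤ J l)) ↔
      ∃ e : Equiv.Perm (Fin m),
        StrictMono (fun k => I (e k)) ∧ StrictAnti (fun k => J (e k)) := by
  constructor
  · intro hanti
    have key : ∀ k l, I k < I l → J l < J k := by
      intro k l h
      have hne : k ≠ l := by rintro rfl; exact lt_irrefl _ h
      have h1 := hanti k l hne
      by_contra hc
      push_neg at hc
      exact h1 ⟨h.le, hc⟩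
    have hInj : Function.Injective I := by
      intro k l h
      by_contra hne
      exact (hdisj k l hne).1 h
    refine ⟨Tuple.sort I, ?_, ?_⟩
    · exact (Tuple.monotone_sort I).strictMono_of_injective
        (hInj.comp (Tuple.sort I).injective)
    · intro a b hab
      exact key _ _ ((Tuple.monotone_sort I).strictMono_of_injective
        (hInj.comp (Tuple.sort I).injective) hab)
  · rintro ⟨e, hA, hB⟩ k l hne ⟨h1, h2⟩
    rcases lt_trichotomy (e.symm k) (e.symm l) with h | h | h
    · have := hB h
      simp only [Equiv.apply_symm_apply] at this
      exact absurd h2 (not_le_of_gt this)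
    · exact hne (by simpa using congrArg e h)
    · have := hA h
      simp only [Equiv.apply_symm_apply] at this
      exact absurd h1 (not_le_of_gt this)

lemma canon (n m : ℕ) (I J : Fin m → Fin n)
    (hIJ : ∀ k, I k ≤ J k)
    (hdisj : ∀ k l, k ≠ l → I k ≠ I l ∧ I k ≠ J l ∧ J k ≠ J l)
    (hcov : ∀ a : Fin n, ∃ k, a = I k ∨ a = J k)
    (hanti : ∀ k l, k ≠ l → ¬ (I k ≤ I l ∧ J k ≤ J l)) :
    {p : Fin n × Fin n | ∃ k, p = (I k, J k)} =
      {p : Fin n × Fin n | (p.1 : ℕ) + (p.2 : ℕ) = n - 1 ∧ p.1 ≤ p.2} := by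
  obtain ⟨e, hA, hB⟩ := (part1 n m I J hIJ hdisj).1 hanti
  set A : Fin m → Fin n := fun k => I (e k) with hAdef
  set B : Fin m → Fin n := fun k => J (e k) with hBdef
  have hAB : ∀ k, A k ≤ B k := fun k => hIJ (e k)
  have hcov' : ∀ a : Fin n, ∃ k, a = A k ∨ a = B k := by
    intro a
    obtain ⟨k, hk⟩ := hcov a
    exact ⟨e.symm k, by simpa [hAdef, hBdef] using hk⟩
  -- m > 0 statements need k : Fin m; all claims are per-k so fine.
  have hAleB : ∀ k l : Fin m, A k ≤ B l := by
    intro k l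
    have hm : 0 < m := k.pos
    have hlast : (⟨m - 1, by omega⟩ : Fin m) = ⟨m - 1, by omega⟩ := rfl
    have h1 : A k ≤ A ⟨m - 1, by omega⟩ := hA.monotone (by simp [Fin.le_def]; omega)
    have h2 : B ⟨m - 1, by omega⟩ ≤ B l := hB.antitone (by simp [Fin.le_def]; omega)
    exact h1.trans ((hAB _).trans h2)
  -- A k = k
  have hge0 : ∀ v (h : v < m), (v : ℕ) ≤ (A ⟨v, h⟩ : ℕ) := by
    intro v
    induction v with
    | zero => intro h; simp
    | succ i ih =>
      intro h
      have hi : i < m := by omega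
      have h1 : (⟨i, hi⟩ : Fin m) < ⟨i + 1, h⟩ := by simp [Fin.lt_def]
      have h2 := hA h1
      have h3 := ih hi
      simp only [Fin.lt_def, Fin.val_mk] at h2 ⊢
      omega
  have hAval : ∀ k : Fin m, (A k : ℕ) = (k : ℕ) := by
    intro k
    have hge : (k : ℕ) ≤ (A k : ℕ) := by
      have := hge0 k.1 k.2
      simpa only [Fin.eta] using this
    have hle : (A k : ℕ) ≤ (k : ℕ) := by
      have hsurj : Set.SurjOn A (Finset.Iio k) (Finset.Iio (A k)) := by
        intro a ha
        simp only [Finset.coe_Iio, Set.mem_Iio] at ha ⊢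
        obtain ⟨l, hl | hl⟩ := hcov' a
        · subst hl
          exact ⟨l, Set.mem_Iio.2 (hA.lt_iff_lt.mp ha), rfl⟩
        · exact absurd (hAleB k l) (not_le_of_gt (hl ▸ ha))
      have := Finset.card_le_card_of_surjOn A hsurj
      simpa [Fin.card_Iio] using this
    omega
  -- B k = n - 1 - k
  have hBval : ∀ k : Fin m, (B k : ℕ) = n - 1 - (k : ℕ) := by
    intro k
    have hub0 : ∀ v (h : v < m), (B ⟨v, h⟩ : ℕ) + v ≤ n - 1 := by
      intro v
      induction v with
      | zero => intro h; have := (B ⟨0, h⟩).isLt; omega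
      | succ i ih =>
        intro h
        have hi : i < m := by omega
        have h1 : (⟨i, hi⟩ : Fin m) < ⟨i + 1, h⟩ := by simp [Fin.lt_def]
        have h2 := hB h1
        have h3 := ih hi
        simp only [Fin.lt_def] at h2
        omega
    have hub : (B k : ℕ) + (k : ℕ) ≤ n - 1 := by
      have := hub0 k.1 k.2
      simpa only [Fin.eta] using this
    have hlb : n - 1 - (B k : ℕ) ≤ (k : ℕ) := by
      have hsurj : Set.SurjOn B (Finset.Iio k) (Finset.Ioi (B k)) := by
        intro a ha
        simp only [Finset.coe_Iio, Finset.coe_Ioi, Set.mem_Ioi, Set.mem_Iio] at ha ⊢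
        obtain ⟨l, hl | hl⟩ := hcov' a
        · exact absurd (hAleB l k) (not_le_of_gt (hl ▸ ha))
        · subst hl
          exact ⟨l, Set.mem_Iio.2 (hB.lt_iff_gt.mp ha), rfl⟩
      have := Finset.card_le_card_of_surjOn B hsurj
      simpa [Fin.card_Ioi, Fin.card_Iio] using this
    have := (B k).isLt
    omega
  -- set over A,B equals set over I,J
  have hsetAB : {p : Fin n × Fin n | ∃ k, p = (I k, J k)} =
      {p : Fin n × Fin n | ∃ k, p = (A k, B k)} := by
    ext p
    constructor
    · rintro ⟨k, rfl⟩; exact ⟨e.symm k, by simp [hAdef, hBdef]⟩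
    · rintro ⟨k, rfl⟩; exact ⟨e k, rfl⟩
  rw [hsetAB]
  ext ⟨p1, p2⟩
  simp only [Set.mem_setOf_eq, Prod.mk.injEq]
  constructor
  · rintro ⟨k, rfl, rfl⟩
    have h1 := hAval k
    have h2 := hBval k
    have h3 : (k : ℕ) ≤ n - 1 := by have := (A k).isLt; omega
    exact ⟨by omega, hAB k⟩
  · rintro ⟨hsum, hle⟩
    obtain ⟨k, hk | hk⟩ := hcov' p1
    · refine ⟨k, hk, Fin.ext ?_⟩
      have h1 := hAval k
      have h2 := hBval k
      have hp1 : (p1 : ℕ) = (k : ℕ) := by rw [hk, h1]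
      have hn := p1.isLt
      omega
    · refine ⟨k, Fin.ext ?_, Fin.ext ?_⟩ <;>
      · have h1 := hAval k
        have h2 := hBval k
        have h3 := hAB k
        simp only [Fin.le_def] at h3 hle
        have hp1 : (p1 : ℕ) = n - 1 - (k : ℕ) := by rw [hk, h2]
        have hn := p1.isLt
        omega

/-- In the root system `C_n`, `Φ₁⁺ = {ε_i + ε_j : 1 ≤ i ≤ j ≤ n}`, with the dominance
order `ε_i + ε_j ≤ ε_h + ε_k ↔ h ≤ i ∧ k ≤ j`.  An orthogonal subset of `Φ₁⁺` is encoded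
by `m` pairwise disjoint pairs `(I k, J k)` with `I k ≤ J k`.

(1) Such an orthogonal subset is an antichain if and only if, up to a permutation of the
pairs, `I` is strictly increasing and `J` is strictly decreasing
(`i₁ < ⋯ < i_m ≤ j_m < ⋯ < j₁`).

(2) Consequently, among the maximal orthogonal subsets (those whose pairs cover all of
`{1,…,n}`) there is a unique antichain. -/
theorem stmt6 (n : ℕ) :
    (∀ (m : ℕ) (I J : Fin m → Fin n),
      (∀ k, I k ≤ J k) →
      (∀ k l, k ≠ l → I k ≠ I l ∧ I k ≠ J l ∧ J k ≠ J l) →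
      ((∀ k l, k ≠ l → ¬ (I k ≤ I l ∧ J k ≤ J l)) ↔
        ∃ e : Equiv.Perm (Fin m),
          StrictMono (fun k => I (e k)) ∧ StrictAnti (fun k => J (e k))))
    ∧
    (∀ (m m' : ℕ) (I J : Fin m → Fin n) (I' J' : Fin m' → Fin n),
      (∀ k, I k ≤ J k) → (∀ k, I' k ≤ J' k) →
      (∀ k l, k ≠ l → I k ≠ I l ∧ I k ≠ J l ∧ J k ≠ J l) →
      (∀ k l, k ≠ l → I' k ≠ I' l ∧ I' k ≠ J' l ∧ J' k ≠ J' l) →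
      (∀ a : Fin n, ∃ k, a = I k ∨ a = J k) →
      (∀ a : Fin n, ∃ k, a = I' k ∨ a = J' k) →
      (∀ k l, k ≠ l → ¬ (I k ≤ I l ∧ J k ≤ J l)) →
      (∀ k l, k ≠ l → ¬ (I' k ≤ I' l ∧ J' k ≤ J' l)) →
      {p : Fin n × Fin n | ∃ k, p = (I k, J k)} =
        {p : Fin n × Fin n | ∃ k, p = (I' k, J' k)}) := by
  refine ⟨fun m I J hIJ hdisj => part1 n m I J hIJ hdisj, ?_⟩
  intro m m' I J I' J' hIJ hIJ' hdisj hdisj' hcov hcov' hanti hanti'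
  rw [canon n m I J hIJ hdisj hcov hanti, canon n m' I' J' hIJ' hdisj' hcov' hanti']
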